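/- Positive decomposition via pseudo-Hilbert-isosceles orthogonality: let Ψ* be a dissipation function on ℝ^E with conjugate Ψ, let (j,f) be a Legendre dual pair, and let j' ∈ ℝ^E satisfy Ψ(j') = Ψ(j). Set j_S := (j + j')/2 and j_A := (j − j')/2, so j = j_S + j_A. Then ⟨j_S, f⟩ = ½ D^{J,F}[j'; −f] ≥ 0 and ⟨j_A, f⟩ = ½ D^{J,F}[j'; f] ≥ 0, where D^{J,F}[a; b] := Ψ(a) + Ψ*(b) − ⟨a,b⟩. Dually, if (j,f) is a Legendre dual pair and f'' satisfies Ψ*(f'') = Ψ*(f), then with f_S := (f + f'')/2, f_A := (f − f'')/2 one has ⟨j, f_S⟩ = ½ D^{J,F}[j; −f''] ≥ 0 and ⟨j, f_A⟩ = ½ D^{J,F}[j; f''] ≥ 0. -/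

import Mathlib

open Matrix Filter Set

noncomputable def grad {n : ℕ} (F : (Fin n → ℝ) → ℝ) (x : Fin n → ℝ) : Fin n → ℝ :=
  fun i => fderiv ℝ F x (Pi.single i 1)

def IsDissipation {n : ℕ} (Ψ : (Fin n → ℝ) → ℝ) : Prop :=
  StrictConvexOn ℝ Set.univ Ψ ∧ ContDiff ℝ 1 Ψ ∧
  Tendsto (fun f => Ψ f / ‖f‖) (Bornology.cobounded (Fin n → ℝ)) atTop ∧
  (∀ f, Ψ (-f) = Ψ f) ∧ Ψ 0 = 0

noncomputable def legendre {n : ℕ} (Ψ : (Fin n → ℝ) → ℝ) (j : Fin n → ℝ) : ℝ :=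
  ⨆ f : Fin n → ℝ, (j ⬝ᵥ f - Ψ f)

noncomputable def breg {n : ℕ} (F : (Fin n → ℝ) → ℝ) (x x' : Fin n → ℝ) : ℝ :=
  F x - F x' - (x - x') ⬝ᵥ grad F x'

def posOrth (n : ℕ) : Set (Fin n → ℝ) := {x | ∀ i, 0 < x i}

def IsThermo {n : ℕ} (Φ : (Fin n → ℝ) → ℝ) : Prop :=
  StrictConvexOn ℝ (posOrth n) Φ ∧
  (∀ x ∈ posOrth n, DifferentiableAt ℝ Φ x) ∧
  Set.BijOn (grad Φ) (posOrth n) Set.univ ∧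
  (∀ xin ∈ posOrth n, ∀ xbd ∈ frontier {x : Fin n → ℝ | ∀ i, 0 ≤ x i},
    Tendsto (fun lam : ℝ => deriv (fun l : ℝ => Φ (l • xin + (1 - l) • xbd)) lam)
      (nhdsWithin 0 (Set.Ioi 0)) atBot)

lemma sum_smul_single {n : ℕ} (v : Fin n → ℝ) :
    ∑ i, v i • (Pi.single i (1:ℝ) : Fin n → ℝ) = v := by
  funext j
  simp [Finset.sum_apply, Pi.single_apply]

lemma grad_dot {n : ℕ} (F : (Fin n → ℝ) → ℝ) (x v : Fin n → ℝ) :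
    grad F x ⬝ᵥ v = fderiv ℝ F x v := by
  unfold grad dotProduct
  have : fderiv ℝ F x v = fderiv ℝ F x (∑ i, v i • (Pi.single i (1:ℝ) : Fin n → ℝ)) := by
    rw [sum_smul_single]
  rw [this, map_sum]
  congr 1
  funext i
  rw [(fderiv ℝ F x).map_smul]
  simp [mul_comm]

/-- Gradient inequality for convex differentiable functions. -/
lemma convex_grad_ineq {n : ℕ} {Ψ : (Fin n → ℝ) → ℝ}
    (hc : ConvexOn ℝ Set.univ Ψ) (hd : Differentiable ℝ Ψ) (f g : Fin n → ℝ) :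
    fderiv ℝ Ψ f (g - f) ≤ Ψ g - Ψ f := by
  set v := g - f with hv
  set φ : ℝ → ℝ := fun t => Ψ (f + t • v) with hφ
  have hline : ∀ t : ℝ, HasDerivAt (fun s : ℝ => f + s • v) v t := by
    intro t
    simpa using ((hasDerivAt_id t).smul_const v).const_add f
  have hder : HasDerivAt φ (fderiv ℝ Ψ f v) 0 := by
    have := (hd (f + (0:ℝ) • v)).hasFDerivAt.comp_hasDerivAt 0 (hline 0)
    simpa [φ, Function.comp_def] using this
  have hslope : ∀ t : ℝ, 0 < t → t ≤ 1 → slope φ 0 t ≤ Ψ g - Ψ f := by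
    intro t ht ht1
    have key : φ t ≤ (1 - t) * Ψ f + t * Ψ g := by
      have := hc.2 (Set.mem_univ f) (Set.mem_univ g) (by linarith : (0:ℝ) ≤ 1 - t)
        ht.le (by ring)
      have heq : (1 - t) • f + t • g = f + t • v := by
        simp only [hv]; module
      simpa [heq, smul_eq_mul] using this
    have hφ0 : φ 0 = Ψ f := by simp [φ]
    rw [slope_def_field, sub_zero, div_le_iff₀ ht]
    nlinarith [key, hφ0]
  have htend : Tendsto (slope φ 0) (nhdsWithin 0 (Set.Ioi 0)) (nhds (fderiv ℝ Ψ f v)) := by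
    have := hasDerivAt_iff_tendsto_slope.mp hder
    exact this.mono_left (nhdsWithin_mono 0 (fun x hx => ne_of_gt hx))
  refine le_of_tendsto htend ?_
  filter_upwards [Ioo_mem_nhdsGT_of_mem (by norm_num : (0:ℝ) ∈ Set.Ico 0 1)] with t ht
  exact hslope t ht.1 ht.2.le

lemma dot_le_norm {n : ℕ} (a g : Fin n → ℝ) :
    a ⬝ᵥ g ≤ (∑ i, |a i|) * ‖g‖ := by
  rw [Finset.sum_mul]
  refine Finset.sum_le_sum fun i _ => ?_
  calc a i * g i ≤ |a i * g i| := le_abs_self _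
    _ = |a i| * |g i| := abs_mul _ _
    _ ≤ |a i| * ‖g‖ := by
        refine mul_le_mul_of_nonneg_left ?_ (abs_nonneg _)
        simpa [Real.norm_eq_abs] using norm_le_pi_norm g i

lemma legendre_bddAbove {n : ℕ} {Ψ : (Fin n → ℝ) → ℝ} (h : IsDissipation Ψ)
    (a : Fin n → ℝ) : BddAbove (Set.range fun g => a ⬝ᵥ g - Ψ g) := by
  set C : ℝ := ∑ i, |a i| with hC
  have hC0 : 0 ≤ C := Finset.sum_nonneg fun i _ => abs_nonneg _
  have hev : ∀ᶠ f in Bornology.cobounded (Fin n → ℝ), C + 1 ≤ Ψ f / ‖f‖ :=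
    h.2.2.1.eventually_ge_atTop (C + 1)
  rw [← comap_norm_atTop, eventually_comap] at hev
  rw [eventually_atTop] at hev
  obtain ⟨R, hR⟩ := hev
  set R' : ℝ := max R 1 with hR'
  obtain ⟨x₀, hx₀mem, hx₀'⟩ := (isCompact_closedBall (0 : Fin n → ℝ) R').exists_isMinOn
    ⟨0, by simp [hR']⟩ (h.2.1.continuous.continuousOn)
  have hx₀ : ∀ y ∈ Metric.closedBall (0 : Fin n → ℝ) R', Ψ x₀ ≤ Ψ y := fun y hy => hx₀' hy
  refine ⟨max 0 (C * R' - Ψ x₀), ?_⟩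
  rintro y ⟨g, rfl⟩
  rcases le_or_gt ‖g‖ R' with hg | hg
  · have h1 : a ⬝ᵥ g ≤ C * R' :=
      (dot_le_norm a g).trans (mul_le_mul_of_nonneg_left hg hC0)
    have h2 : Ψ x₀ ≤ Ψ g := hx₀ g (by simpa [Metric.mem_closedBall] using hg)
    have : a ⬝ᵥ g - Ψ g ≤ C * R' - Ψ x₀ := by linarith
    exact this.trans (le_max_right _ _)
  · have hgpos : (0:ℝ) < ‖g‖ := lt_of_lt_of_le one_pos ((le_max_right R 1).trans hg.le)
    have h1 : C + 1 ≤ Ψ g / ‖g‖ := hR ‖g‖ ((le_max_left R 1).trans hg.le) g rfl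
    have h2 : (C + 1) * ‖g‖ ≤ Ψ g := (le_div_iff₀ hgpos).mp h1
    have : a ⬝ᵥ g - Ψ g ≤ -‖g‖ := by
      have := dot_le_norm a g
      nlinarith
    have : a ⬝ᵥ g - Ψ g ≤ 0 := this.trans (by linarith)
    exact this.trans (le_max_left _ _)

lemma fenchel_young {n : ℕ} {Ψ : (Fin n → ℝ) → ℝ} (h : IsDissipation Ψ)
    (a b : Fin n → ℝ) : a ⬝ᵥ b - Ψ b ≤ legendre Ψ a :=
  le_ciSup (legendre_bddAbove h a) b

lemma legendre_grad {n : ℕ} {Ψ : (Fin n → ℝ) → ℝ} (h : IsDissipation Ψ)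
    (f : Fin n → ℝ) : legendre Ψ (grad Ψ f) = grad Ψ f ⬝ᵥ f - Ψ f := by
  refine le_antisymm (ciSup_le fun g => ?_) (fenchel_young h _ f)
  have hgi := convex_grad_ineq h.1.convexOn (h.2.1.differentiable one_ne_zero) f g
  rw [← grad_dot, dotProduct_sub] at hgi
  linarith


/-- Mixed Bregman (Fenchel–Young) divergence D^{J,F}[a; b] := Ψ(a) + Ψ*(b) − ⟨a,b⟩. -/
noncomputable def bregJF {n : ℕ} (Ψstar : (Fin n → ℝ) → ℝ) (a b : Fin n → ℝ) : ℝ :=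
  legendre Ψstar a + Ψstar b - a ⬝ᵥ b

/-- Positive decomposition of the bilinear pairing via pseudo-Hilbert-isosceles
orthogonality, for fluxes on the same central affine manifold and dually for forces. -/
theorem pseudo_hilbert_isosceles_positive_decomposition {n : ℕ}
    (Ψstar : (Fin n → ℝ) → ℝ) (h : IsDissipation Ψstar) :
    (∀ j f j' : Fin n → ℝ, j = grad Ψstar f →
      legendre Ψstar j' = legendre Ψstar j →
      (((1/2 : ℝ) • (j + j')) ⬝ᵥ f = (1/2 : ℝ) * bregJF Ψstar j' (-f) ∧
        0 ≤ ((1/2 : ℝ) • (j + j')) ⬝ᵥ f) ∧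
      (((1/2 : ℝ) • (j - j')) ⬝ᵥ f = (1/2 : ℝ) * bregJF Ψstar j' f ∧
        0 ≤ ((1/2 : ℝ) • (j - j')) ⬝ᵥ f)) ∧
    (∀ j f f'' : Fin n → ℝ, j = grad Ψstar f →
      Ψstar f'' = Ψstar f →
      (j ⬝ᵥ ((1/2 : ℝ) • (f + f'')) = (1/2 : ℝ) * bregJF Ψstar j (-f'') ∧
        0 ≤ j ⬝ᵥ ((1/2 : ℝ) • (f + f''))) ∧
      (j ⬝ᵥ ((1/2 : ℝ) • (f - f'')) = (1/2 : ℝ) * bregJF Ψstar j f'' ∧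
        0 ≤ j ⬝ᵥ ((1/2 : ℝ) • (f - f'')))) := by
  
  have hsym := h.2.2.2.1
  have hfe : ∀ f : Fin n → ℝ,
      legendre Ψstar (grad Ψstar f) = grad Ψstar f ⬝ᵥ f - Ψstar f := legendre_grad h
  have hFY : ∀ a b : Fin n → ℝ, 0 ≤ bregJF Ψstar a b := fun a b => by
    have := fenchel_young h a b
    unfold bregJF
    linarith
  constructor
  · intro j f j' hj hL
    subst hj
    have e1 : ((1/2 : ℝ) • (grad Ψstar f + j')) ⬝ᵥ f
        = (1/2 : ℝ) * bregJF Ψstar j' (-f) := by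
      unfold bregJF
      rw [hL, hfe f, hsym f]
      simp only [smul_dotProduct, add_dotProduct, dotProduct_neg,
        smul_eq_mul]
      ring
    have e2 : ((1/2 : ℝ) • (grad Ψstar f - j')) ⬝ᵥ f
        = (1/2 : ℝ) * bregJF Ψstar j' f := by
      unfold bregJF
      rw [hL, hfe f]
      simp only [smul_dotProduct, sub_dotProduct, smul_eq_mul]
      ring
    exact ⟨⟨e1, e1 ▸ by have := hFY j' (-f); linarith⟩,
      ⟨e2, e2 ▸ by have := hFY j' f; linarith⟩⟩
  · intro j f f'' hj hpsi
    subst hj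
    have e1 : grad Ψstar f ⬝ᵥ ((1/2 : ℝ) • (f + f''))
        = (1/2 : ℝ) * bregJF Ψstar (grad Ψstar f) (-f'') := by
      unfold bregJF
      rw [hfe f, hsym f'', hpsi]
      simp only [dotProduct_smul, dotProduct_add, dotProduct_neg,
        smul_eq_mul]
      ring
    have e2 : grad Ψstar f ⬝ᵥ ((1/2 : ℝ) • (f - f''))
        = (1/2 : ℝ) * bregJF Ψstar (grad Ψstar f) f'' := by
      unfold bregJF
      rw [hfe f, hpsi]
      simp only [dotProduct_smul, dotProduct_sub, smul_eq_mul]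
      ring
    exact ⟨⟨e1, e1 ▸ by have := hFY (grad Ψstar f) (-f''); linarith⟩,
      ⟨e2, e2 ▸ by have := hFY (grad Ψstar f) f''; linarith⟩⟩
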